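/- The map d(μ,ν) = √(ℰ(X,Y)) where X ∼ μ, Y ∼ ν independent, defines a metric on the space of probability measures on ℝ with finite first moment; in particular the triangle inequality √ℰ(X,Z) ≤ √ℰ(X,Y) + √ℰ(Y,Z) holds. -/

import Mathlib

open MeasureTheory ProbabilityTheory
open scoped ENNReal

noncomputable section

/-- The energy distance between two probability measures on `ℝ`, expressed via
product measures: `ℰ(μ, ν) = 2 E|X-Y| - E|X-X'| - E|Y-Y'|` for independent
`X ∼ μ`, `Y ∼ ν` and independent copies `X'`, `Y'`. -/
def energyDist (μ ν : Measure ℝ) : ℝ :=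
  2 * (∫ p : ℝ × ℝ, |p.1 - p.2| ∂(μ.prod ν))
    - (∫ p : ℝ × ℝ, |p.1 - p.2| ∂(μ.prod μ))
    - ∫ p : ℝ × ℝ, |p.1 - p.2| ∂(ν.prod ν)

namespace EnergyAux

/-- indicator of `x ≤ t`. -/
def k (x t : ℝ) : ℝ := if x ≤ t then 1 else 0

def F (μ : Measure ℝ) (t : ℝ) : ℝ := (μ (Set.Iic t)).toReal

def W (μ ν : Measure ℝ) (t : ℝ) : ℝ := F μ t + F ν t - 2 * (F μ t * F ν t)

lemma norm_k_le_one (x t : ℝ) : ‖k x t‖ ≤ 1 := by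
  unfold k; split <;> simp

lemma k_mul_self (x t : ℝ) : k x t * k x t = k x t := by unfold k; split <;> norm_num

lemma measurable_k : Measurable (fun q : ℝ × ℝ => k q.1 q.2) :=
  Measurable.ite (measurableSet_le measurable_fst measurable_snd) measurable_const
    measurable_const

lemma sq_diff_eq (x y t : ℝ) :
    (k x t - k y t) ^ 2
      = Set.indicator (Set.Ico (min x y) (max x y)) (fun _ => (1 : ℝ)) t := by
  have key : ∀ a b : ℝ, a ≤ b → ∀ t : ℝ,
      (k a t - k b t) ^ 2 = Set.indicator (Set.Ico a b) (fun _ => (1 : ℝ)) t := by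
    intro a b hab t
    unfold k
    by_cases ha : a ≤ t <;> by_cases hb : b ≤ t
    · rw [if_pos ha, if_pos hb,
        Set.indicator_of_notMem (fun hm => absurd hm.2 (not_lt.2 hb))]
      norm_num
    · rw [if_pos ha, if_neg hb, Set.indicator_of_mem (Set.mem_Ico.mpr ⟨ha, lt_of_not_ge hb⟩)]
      norm_num
    · exact absurd (hab.trans hb) ha
    · rw [if_neg ha, if_neg hb, Set.indicator_of_notMem (fun hm => absurd hm.1 ha)]
      norm_num
  rcases le_total x y with h | h
  · rw [min_eq_left h, max_eq_right h]; exact key x y h t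
  · rw [min_eq_right h, max_eq_left h]
    calc (k x t - k y t) ^ 2 = (k y t - k x t) ^ 2 := by ring
      _ = _ := key y x h t

lemma integrable_sq_diff (x y : ℝ) :
    Integrable (fun t => (k x t - k y t) ^ 2) (volume : Measure ℝ) := by
  have : (fun t => (k x t - k y t) ^ 2)
      = Set.indicator (Set.Ico (min x y) (max x y)) (fun _ => (1 : ℝ)) :=
    funext fun t => sq_diff_eq x y t
  rw [this, integrable_indicator_iff measurableSet_Ico]
  exact integrableOn_const measure_Ico_lt_top.ne

lemma integral_sq_diff (x y : ℝ) :
    ∫ t, (k x t - k y t) ^ 2 = |x - y| := by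
  have : (fun t => (k x t - k y t) ^ 2)
      = Set.indicator (Set.Ico (min x y) (max x y)) (fun _ => (1 : ℝ)) :=
    funext fun t => sq_diff_eq x y t
  rw [this, integral_indicator_const _ measurableSet_Ico, Real.volume_real_Ico, smul_eq_mul,
    mul_one, max_eq_left (sub_nonneg.2 min_le_max),
    max_sub_min_eq_abs]
  exact abs_sub_comm y x

variable {μ ν : Measure ℝ}

lemma integral_k (μ : Measure ℝ) [IsProbabilityMeasure μ] (t : ℝ) :
    ∫ x, k x t ∂μ = F μ t := by
  have : (fun x => k x t) = Set.indicator (Set.Iic t) (fun _ => (1 : ℝ)) := by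
    funext x
    unfold k
    by_cases h : x ≤ t
    · rw [if_pos h, Set.indicator_of_mem (Set.mem_Iic.mpr h)]
    · rw [if_neg h, Set.indicator_of_notMem (fun hm => h (Set.mem_Iic.mp hm))]
  rw [this, integral_indicator_const _ measurableSet_Iic, smul_eq_mul, mul_one, F]
  rfl

lemma integrable_k_fst [IsProbabilityMeasure μ] [IsProbabilityMeasure ν] (t : ℝ) :
    Integrable (fun p : ℝ × ℝ => k p.1 t) (μ.prod ν) := by
  refine Integrable.mono' (integrable_const 1) ?_ (Filter.Eventually.of_forall fun p => norm_k_le_one _ _)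
  exact (measurable_k.comp (measurable_fst.prodMk measurable_const)).aestronglyMeasurable

lemma integrable_k_snd [IsProbabilityMeasure μ] [IsProbabilityMeasure ν] (t : ℝ) :
    Integrable (fun p : ℝ × ℝ => k p.2 t) (μ.prod ν) := by
  refine Integrable.mono' (integrable_const 1) ?_ (Filter.Eventually.of_forall fun p => norm_k_le_one _ _)
  exact (measurable_k.comp (measurable_snd.prodMk measurable_const)).aestronglyMeasurable

lemma integrable_k_mul [IsProbabilityMeasure μ] [IsProbabilityMeasure ν] (t : ℝ) :
    Integrable (fun p : ℝ × ℝ => k p.1 t * k p.2 t) (μ.prod ν) := by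
  refine Integrable.mono' (integrable_const 1) ?_ (Filter.Eventually.of_forall fun p => ?_)
  · exact ((measurable_k.comp (measurable_fst.prodMk measurable_const)).mul
      (measurable_k.comp (measurable_snd.prodMk measurable_const))).aestronglyMeasurable
  · rw [norm_mul]
    calc ‖k p.1 t‖ * ‖k p.2 t‖ ≤ 1 * 1 :=
        mul_le_mul (norm_k_le_one _ _) (norm_k_le_one _ _) (norm_nonneg _) zero_le_one
      _ = 1 := mul_one 1

lemma inner_integral [IsProbabilityMeasure μ] [IsProbabilityMeasure ν] (t : ℝ) :
    ∫ p : ℝ × ℝ, (k p.1 t - k p.2 t) ^ 2 ∂(μ.prod ν) = W μ ν t := by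
  have e : (fun p : ℝ × ℝ => (k p.1 t - k p.2 t) ^ 2)
      = fun p => k p.1 t + k p.2 t - 2 * (k p.1 t * k p.2 t) := by
    funext p
    calc (k p.1 t - k p.2 t) ^ 2
        = k p.1 t * k p.1 t + k p.2 t * k p.2 t - 2 * (k p.1 t * k p.2 t) := by ring
      _ = _ := by rw [k_mul_self, k_mul_self]
  have hA : Integrable (fun p : ℝ × ℝ => k p.1 t + k p.2 t) (μ.prod ν) :=
    (integrable_k_fst t).add (integrable_k_snd t)
  have hC : Integrable (fun p : ℝ × ℝ => 2 * (k p.1 t * k p.2 t)) (μ.prod ν) :=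
    (integrable_k_mul t).const_mul 2
  rw [e, integral_sub hA hC,
    integral_add (integrable_k_fst t) (integrable_k_snd t), integral_const_mul,
    integral_prod_mul (fun x => k x t) (fun y => k y t)]
  have h1 : ∫ p : ℝ × ℝ, k p.1 t ∂(μ.prod ν) = F μ t := by
    rw [integral_fun_fst (fun x => k x t), probReal_univ, integral_k]; simp
  have h2 : ∫ p : ℝ × ℝ, k p.2 t ∂(μ.prod ν) = F ν t := by
    rw [integral_fun_snd (fun y => k y t), probReal_univ, integral_k]; simp
  rw [h1, h2, integral_k, integral_k, W]

lemma integrable_abs_sub [IsProbabilityMeasure μ] [IsProbabilityMeasure ν]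
    (hμ : Integrable (fun x => |x|) μ) (hν : Integrable (fun x => |x|) ν) :
    Integrable (fun p : ℝ × ℝ => |p.1 - p.2|) (μ.prod ν) := by
  have h1 : Integrable (fun p : ℝ × ℝ => |p.1| * 1) (μ.prod ν) :=
    hμ.mul_prod (integrable_const (1:ℝ))
  have h2 : Integrable (fun p : ℝ × ℝ => 1 * |p.2|) (μ.prod ν) :=
    (integrable_const (1:ℝ)).mul_prod hν
  refine Integrable.mono' ((by simpa using h1 : Integrable (fun p : ℝ × ℝ => |p.1|) (μ.prod ν)).add
      (by simpa using h2)) ?_ (Filter.Eventually.of_forall fun p => ?_)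
  · exact (continuous_abs.comp (continuous_fst.sub continuous_snd)).aestronglyMeasurable
  · rw [Real.norm_eq_abs, abs_abs]
    exact abs_sub _ _

lemma key (μ ν : Measure ℝ) [IsProbabilityMeasure μ] [IsProbabilityMeasure ν]
    (hμ : Integrable (fun x => |x|) μ) (hν : Integrable (fun x => |x|) ν) :
    (∫ p : ℝ × ℝ, |p.1 - p.2| ∂(μ.prod ν)) = (∫ t, W μ ν t) ∧
      Integrable (W μ ν) (volume : Measure ℝ) := by
  set f : (ℝ × ℝ) → ℝ → ℝ := fun p t => (k p.1 t - k p.2 t) ^ 2 with hf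
  have hmeas : AEStronglyMeasurable (Function.uncurry f) ((μ.prod ν).prod volume) := by
    have : Measurable (Function.uncurry f) := by
      apply Measurable.pow_const
      exact (measurable_k.comp ((measurable_fst.comp measurable_fst).prodMk
        measurable_snd)).sub
        (measurable_k.comp ((measurable_snd.comp measurable_fst).prodMk measurable_snd))
    exact this.aestronglyMeasurable
  have hint : Integrable (Function.uncurry f) ((μ.prod ν).prod volume) := by
    rw [integrable_prod_iff hmeas]
    constructor
    · exact Filter.Eventually.of_forall fun p => integrable_sq_diff p.1 p.2
    · refine (integrable_abs_sub hμ hν).congr (Filter.Eventually.of_forall fun p => ?_)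
      have h1 : (fun t : ℝ => ‖Function.uncurry f (p, t)‖)
          = fun t : ℝ => (k p.1 t - k p.2 t) ^ 2 := by
        funext t
        show ‖(k p.1 t - k p.2 t) ^ 2‖ = _
        exact Real.norm_of_nonneg (sq_nonneg _)
      show |p.1 - p.2| = ∫ t : ℝ, ‖Function.uncurry f (p, t)‖
      rw [h1, integral_sq_diff]
  have hswap := integral_integral_swap hint
  have e1 : (∫ p : ℝ × ℝ, |p.1 - p.2| ∂(μ.prod ν))
      = ∫ p : ℝ × ℝ, (∫ t : ℝ, f p t) ∂(μ.prod ν) := by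
    refine integral_congr_ae (Filter.Eventually.of_forall fun p => ?_)
    exact (integral_sq_diff p.1 p.2).symm
  have e3 : (∫ t : ℝ, (∫ p : ℝ × ℝ, f p t ∂(μ.prod ν))) = ∫ t, W μ ν t := by
    refine integral_congr_ae (Filter.Eventually.of_forall fun t => ?_)
    exact inner_integral t
  refine ⟨e1.trans (hswap.trans e3), ?_⟩
  have h := hint.integral_prod_right
  refine h.congr (Filter.Eventually.of_forall fun t => ?_)
  exact inner_integral t

lemma F_measurable (μ : Measure ℝ) [IsProbabilityMeasure μ] : Measurable (F μ) := by
  have hmono : Monotone (F μ) := fun a b hab =>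
    ENNReal.toReal_mono (measure_ne_top μ _) (measure_mono (Set.Iic_subset_Iic.mpr hab))
  exact hmono.measurable

lemma W_pointwise (μ ν : Measure ℝ) (t : ℝ) :
    2 * (F μ t - F ν t) ^ 2 = 2 * W μ ν t - W μ μ t - W ν ν t := by
  unfold W; ring

lemma energyDist_eq (μ ν : Measure ℝ) [IsProbabilityMeasure μ] [IsProbabilityMeasure ν]
    (hμ : Integrable (fun x => |x|) μ) (hν : Integrable (fun x => |x|) ν) :
    energyDist μ ν = (∫ t, 2 * (F μ t - F ν t) ^ 2) ∧
      Integrable (fun t => 2 * (F μ t - F ν t) ^ 2) (volume : Measure ℝ) := by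
  obtain ⟨e1, i1⟩ := key μ ν hμ hν
  obtain ⟨e2, i2⟩ := key μ μ hμ hμ
  obtain ⟨e3, i3⟩ := key ν ν hν hν
  have i1' : Integrable (fun t => 2 * W μ ν t) (volume : Measure ℝ) := i1.const_mul 2
  have i12 : Integrable (fun t => 2 * W μ ν t - W μ μ t) (volume : Measure ℝ) := i1'.sub i2
  have hint : Integrable (fun t => 2 * W μ ν t - W μ μ t - W ν ν t) (volume : Measure ℝ) :=
    i12.sub i3
  constructor
  · rw [energyDist, e1, e2, e3, ← integral_const_mul 2 (W μ ν), ← integral_sub i1' i2,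
      ← integral_sub i12 i3]
    exact (integral_congr_ae (Filter.Eventually.of_forall fun t => W_pointwise μ ν t)).symm
  · exact hint.congr (Filter.Eventually.of_forall fun t => (W_pointwise μ ν t).symm)

lemma sqrt_triangle {u v : ℝ → ℝ} (hum : Measurable u) (hvm : Measurable v)
    (hu2 : Integrable (fun t => u t ^ 2) (volume : Measure ℝ))
    (hv2 : Integrable (fun t => v t ^ 2) (volume : Measure ℝ)) :
    Real.sqrt (∫ t, 2 * (u t + v t) ^ 2) ≤
      Real.sqrt (∫ t, 2 * u t ^ 2) + Real.sqrt (∫ t, 2 * v t ^ 2) := by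
  set A := ∫ t, u t ^ 2 with hA_def
  set B := ∫ t, v t ^ 2 with hB_def
  have hA : 0 ≤ A := integral_nonneg fun t => sq_nonneg _
  have hB : 0 ≤ B := integral_nonneg fun t => sq_nonneg _
  have hadd2 : Integrable (fun t => u t ^ 2 + v t ^ 2) (volume : Measure ℝ) := hu2.add hv2
  have huv : Integrable (fun t => u t * v t) (volume : Measure ℝ) := by
    refine Integrable.mono' hadd2 ((hum.mul hvm).aestronglyMeasurable)
      (Filter.Eventually.of_forall fun t => ?_)
    rw [Real.norm_eq_abs, abs_mul]
    nlinarith [sq_nonneg (|u t| - |v t|), abs_nonneg (u t), abs_nonneg (v t),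
      sq_abs (u t), sq_abs (v t)]
  have habs_int : Integrable (fun t => |u t| * |v t|) (volume : Measure ℝ) :=
    huv.abs.congr (Filter.Eventually.of_forall fun t => abs_mul _ _)
  have hconj : (2:ℝ).HolderConjugate 2 := Real.HolderConjugate.two_two
  have hof : ENNReal.ofReal (2:ℝ) = 2 := by
    rw [ENNReal.ofReal_ofNat]
  have hmu : MemLp (fun t => |u t|) (ENNReal.ofReal 2) (volume : Measure ℝ) := by
    rw [hof, memLp_two_iff_integrable_sq hum.abs.aestronglyMeasurable]
    exact hu2.congr (Filter.Eventually.of_forall fun t => (sq_abs (u t)).symm)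
  have hmv : MemLp (fun t => |v t|) (ENNReal.ofReal 2) (volume : Measure ℝ) := by
    rw [hof, memLp_two_iff_integrable_sq hvm.abs.aestronglyMeasurable]
    exact hv2.congr (Filter.Eventually.of_forall fun t => (sq_abs (v t)).symm)
  have h2 := integral_mul_le_Lp_mul_Lq_of_nonneg hconj
    (Filter.Eventually.of_forall fun t => abs_nonneg (u t))
    (Filter.Eventually.of_forall fun t => abs_nonneg (v t)) hmu hmv
  have hpow : ∀ w : ℝ → ℝ, (∫ t, |w t| ^ (2:ℝ)) = ∫ t, w t ^ 2 := by
    intro w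
    refine integral_congr_ae (Filter.Eventually.of_forall fun t => ?_)
    show |w t| ^ (2:ℝ) = w t ^ 2
    have h := Real.rpow_natCast (|w t|) 2
    push_cast at h
    rw [h, sq_abs]
  rw [hpow u, hpow v, ← Real.sqrt_eq_rpow, ← Real.sqrt_eq_rpow] at h2
  have hCS : (∫ t, u t * v t) ≤ Real.sqrt A * Real.sqrt B := by
    refine le_trans (integral_mono huv habs_int fun t => ?_) h2
    calc u t * v t ≤ |u t * v t| := le_abs_self _
      _ = |u t| * |v t| := abs_mul _ _
  have hsum : (∫ t, (u t + v t) ^ 2) = A + 2 * (∫ t, u t * v t) + B := by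
    have e : (fun t => (u t + v t) ^ 2)
        = fun t => u t ^ 2 + (2 * (u t * v t) + v t ^ 2) := funext fun t => by ring
    have hg1 : Integrable (fun t => 2 * (u t * v t) + v t ^ 2) (volume : Measure ℝ) :=
      (huv.const_mul 2).add hv2
    rw [e, integral_add hu2 hg1, integral_add (huv.const_mul 2) hv2, integral_const_mul]
    ring
  have hfinal : (∫ t, (u t + v t) ^ 2) ≤ (Real.sqrt A + Real.sqrt B) ^ 2 := by
    have expand : (Real.sqrt A + Real.sqrt B) ^ 2
        = A + 2 * (Real.sqrt A * Real.sqrt B) + B := by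
      rw [add_sq, Real.sq_sqrt hA, Real.sq_sqrt hB]
      ring
    rw [hsum, expand]
    linarith
  have step1 : Real.sqrt (∫ t, 2 * (u t + v t) ^ 2)
      = Real.sqrt 2 * Real.sqrt (∫ t, (u t + v t) ^ 2) := by
    rw [integral_const_mul, Real.sqrt_mul (by norm_num : (0:ℝ) ≤ 2)]
  have step2 : Real.sqrt (∫ t, (u t + v t) ^ 2) ≤ Real.sqrt A + Real.sqrt B := by
    have := Real.sqrt_le_sqrt hfinal
    rwa [Real.sqrt_sq (by positivity)] at this
  have step3 : Real.sqrt (∫ t, 2 * u t ^ 2) = Real.sqrt 2 * Real.sqrt A := by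
    rw [integral_const_mul, Real.sqrt_mul (by norm_num : (0:ℝ) ≤ 2)]
  have step4 : Real.sqrt (∫ t, 2 * v t ^ 2) = Real.sqrt 2 * Real.sqrt B := by
    rw [integral_const_mul, Real.sqrt_mul (by norm_num : (0:ℝ) ≤ 2)]
  rw [step1, step3, step4, ← mul_add]
  exact mul_le_mul_of_nonneg_left step2 (Real.sqrt_nonneg 2)

end EnergyAux

open EnergyAux in
theorem sqrt_energyDist_is_metric
    (μ ν ρ : Measure ℝ)
    [IsProbabilityMeasure μ] [IsProbabilityMeasure ν] [IsProbabilityMeasure ρ]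
    (hμ : Integrable (fun x => |x|) μ) (hν : Integrable (fun x => |x|) ν)
    (hρ : Integrable (fun x => |x|) ρ) :
    0 ≤ energyDist μ ν ∧
    (energyDist μ ν = 0 ↔ μ = ν) ∧
    energyDist μ ν = energyDist ν μ ∧
    Real.sqrt (energyDist μ ρ) ≤ Real.sqrt (energyDist μ ν) + Real.sqrt (energyDist ν ρ) := by
  obtain ⟨eμν, iμν⟩ := energyDist_eq μ ν hμ hν
  obtain ⟨eνρ, iνρ⟩ := energyDist_eq ν ρ hν hρ
  obtain ⟨eμρ, iμρ⟩ := energyDist_eq μ ρ hμ hρ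
  refine ⟨?_, ⟨?_, ?_⟩, ?_, ?_⟩
  · rw [eμν]
    exact integral_nonneg fun t => by positivity
  · intro h0
    rw [eμν] at h0
    have h1 := (integral_eq_zero_iff_of_nonneg (fun t => by positivity) iμν).1 h0
    have hFae : ∀ᵐ t ∂(volume : Measure ℝ), F μ t = F ν t := by
      filter_upwards [h1] with t ht
      have ht' : 2 * (F μ t - F ν t) ^ 2 = 0 := by simpa using ht
      have h2 : (F μ t - F ν t) ^ 2 = 0 := by linarith
      have h3 := (pow_eq_zero_iff (by norm_num : (2:ℕ) ≠ 0)).1 h2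
      linarith
    have hnull : (volume : Measure ℝ) {t | ¬ F μ t = F ν t} = 0 := ae_iff.mp hFae
    refine MeasureTheory.Measure.ext_of_Iic μ ν fun a => ?_
    have hu : ∀ n : ℕ, ∃ t : ℝ, t ∈ Set.Ioo a (a + 1/((n:ℝ)+1)) ∧ F μ t = F ν t := by
      intro n
      by_contra hcon
      push_neg at hcon
      have hsub : Set.Ioo a (a + 1/((n:ℝ)+1)) ⊆ {t | ¬ F μ t = F ν t} :=
        fun t ht => hcon t ht
      have h0' := measure_mono_null hsub hnull
      rw [Real.volume_Ioo, ENNReal.ofReal_eq_zero] at h0'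
      have hpos : (0:ℝ) < 1/((n:ℝ)+1) := by positivity
      linarith
    choose w hw1 hw2 using hu
    have hInter : ⋂ n, Set.Iic (w n) = Set.Iic a := by
      ext x
      simp only [Set.mem_iInter, Set.mem_Iic]
      constructor
      · intro hx
        by_contra hgt
        push_neg at hgt
        obtain ⟨n, hn⟩ := exists_nat_one_div_lt (show (0:ℝ) < x - a by linarith)
        have h2 := (hw1 n).2
        have h3 := hx n
        linarith
      · intro hx n
        exact hx.trans (hw1 n).1.le
    have hdir : Directed (· ⊇ ·) (fun n : ℕ => Set.Iic (w n)) := by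
      intro m n
      rcases le_total (w m) (w n) with h | h
      · exact ⟨m, subset_rfl, Set.Iic_subset_Iic.mpr h⟩
      · exact ⟨n, Set.Iic_subset_Iic.mpr h, subset_rfl⟩
    have hμa : μ (Set.Iic a) = ⨅ n, μ (Set.Iic (w n)) := by
      rw [← hInter]
      exact Directed.measure_iInter (fun n => measurableSet_Iic.nullMeasurableSet) hdir
        ⟨0, measure_ne_top μ _⟩
    have hνa : ν (Set.Iic a) = ⨅ n, ν (Set.Iic (w n)) := by
      rw [← hInter]
      exact Directed.measure_iInter (fun n => measurableSet_Iic.nullMeasurableSet) hdir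
        ⟨0, measure_ne_top ν _⟩
    rw [hμa, hνa]
    exact iInf_congr fun n =>
      (ENNReal.toReal_eq_toReal_iff' (measure_ne_top μ _) (measure_ne_top ν _)).1 (hw2 n)
  · intro h
    subst h
    simp only [energyDist]
    ring
  · rw [eμν, (energyDist_eq ν μ hν hμ).1]
    exact integral_congr_ae (Filter.Eventually.of_forall fun t => by ring)
  · have h1 : energyDist μ ρ
        = ∫ t, 2 * ((F μ t - F ν t) + (F ν t - F ρ t)) ^ 2 := by
      rw [eμρ]
      exact integral_congr_ae (Filter.Eventually.of_forall fun t => by ring)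
    have hu2 : Integrable (fun t => (F μ t - F ν t) ^ 2) (volume : Measure ℝ) :=
      (iμν.const_mul (1/2)).congr (Filter.Eventually.of_forall fun t => by ring)
    have hv2 : Integrable (fun t => (F ν t - F ρ t) ^ 2) (volume : Measure ℝ) :=
      (iνρ.const_mul (1/2)).congr (Filter.Eventually.of_forall fun t => by ring)
    rw [h1, eμν, eνρ]
    exact sqrt_triangle ((F_measurable μ).sub (F_measurable ν))
      ((F_measurable ν).sub (F_measurable ρ)) hu2 hv2
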